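/- Let k ≥ 2 be an integer, let c_i = k^{i−1} for 1 ≤ i ≤ k−1 and c_k = −∑_{i=1}^{k−1} k^{i−1}, let p be a prime with p > (k+1)·k^{k−1}, and set q_i = (p + c_i)/(kp) ∈ ℚ for 1 ≤ i ≤ k. Let H ⊆ ℚ_{≥0} be an additive submonoid such that every element of H has nonnegative p-adic valuation, and let H' be the additive submonoid of ℚ_{≥0} generated by H together with q_1, …, q_k. Then each q_i is an atom of H'. -/

import Mathlib

private lemma geom_le_pow (k : ℤ) (hk : 2 ≤ k) : ∀ n : ℕ, (∑ j ∈ Finset.range n, k ^ j) ≤ k ^ n := by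
  intro n
  induction n with
  | zero => simp
  | succ n ih =>
      rw [Finset.sum_range_succ, pow_succ]
      nlinarith [pow_pos (by omega : (0:ℤ) < k) n]

private lemma closure_range_mem (k : ℕ) (q : Fin k → ℚ) {x : ℚ}
    (hx : x ∈ AddSubmonoid.closure (Set.range q)) :
    ∃ a : Fin k → ℕ, x = ∑ j, (a j : ℚ) * q j := by
  induction hx using AddSubmonoid.closure_induction with
  | mem x hx =>
      obtain ⟨j, rfl⟩ := hx
      refine ⟨Pi.single j 1, ?_⟩
      simp [Pi.single_apply, apply_ite (fun n : ℕ => (n : ℚ))]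
  | zero => exact ⟨0, by simp⟩
  | add x y hx hy ihx ihy =>
      obtain ⟨a, rfl⟩ := ihx
      obtain ⟨b, rfl⟩ := ihy
      refine ⟨a + b, ?_⟩
      rw [← Finset.sum_add_distrib]
      refine Finset.sum_congr rfl fun j _ => ?_
      simp only [Pi.add_apply]
      push_cast
      ring
private lemma key_val (p k : ℕ) (hp : p.Prime) (hdvd : ¬ (p:ℤ) ∣ (k:ℤ)) (x : ℚ) (hx0 : x ≠ 0)
    (hxval : 0 ≤ padicValRat p x) (M : ℤ) (hM : ((k:ℚ) * (p:ℚ)) * x = (M:ℚ))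
    (hpM : ¬ (p:ℤ) ∣ M) : False := by
  haveI : Fact p.Prime := ⟨hp⟩
  have hk0 : (k:ℚ) ≠ 0 := by
    intro h
    exact hdvd (by rw [show (k:ℤ) = 0 by exact_mod_cast h]; exact dvd_zero _)
  have hp0 : (p:ℚ) ≠ 0 := Nat.cast_ne_zero.mpr hp.pos.ne'
  have hM1 : padicValRat p ((M:ℤ):ℚ) = 0 := by
    rw [padicValRat.of_int, padicValInt.eq_zero_of_not_dvd hpM]; simp
  have hk1 : padicValRat p ((k:ℚ)) = 0 := by
    rw [show ((k:ℚ)) = (((k:ℤ)):ℚ) by push_cast; ring, padicValRat.of_int,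
      padicValInt.eq_zero_of_not_dvd hdvd]; simp
  have h2 : padicValRat p (((k:ℚ) * (p:ℚ)) * x) = padicValRat p ((k:ℚ) * (p:ℚ)) + padicValRat p x :=
    padicValRat.mul (mul_ne_zero hk0 hp0) hx0
  have h3 : padicValRat p ((k:ℚ) * (p:ℚ)) = padicValRat p (k:ℚ) + padicValRat p (p:ℚ) :=
    padicValRat.mul hk0 hp0
  have h4 : padicValRat p ((p:ℚ)) = 1 := padicValRat.self hp.one_lt
  rw [hM] at h2
  push_cast at hM1
  omega



/-- `u` is an atom of the additive submonoid `H` of `ℚ`: it is a nonzero element of `H`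
that is not the sum of two nonzero elements of `H`. -/
def IsAtomOf (H : AddSubmonoid ℚ) (u : ℚ) : Prop :=
  u ∈ H ∧ u ≠ 0 ∧ ∀ v ∈ H, ∀ w ∈ H, v ≠ 0 → w ≠ 0 → u ≠ v + w

/-- With `k ≥ 2`, the explicit integers `c i = k^i` (for `i + 1 < k`,
indexing from `0`) and `c (k-1) = -∑_{j<k-1} k^j`, a prime `p > (k+1)·k^(k-1)`,
and `q i = (p + c i)/(k·p)`: if `H ⊆ ℚ_{≥0}` is an additive submonoid all of whose
nonzero elements have nonnegative `p`-adic valuation, and `H'` is the submonoid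
generated by `H` and the `q i`, then each `q i` is an atom of `H'`. -/
theorem stmt4 (k : ℕ) (hk : 2 ≤ k) (p : ℕ) (hp : p.Prime)
    (hpk : ((k : ℤ) + 1) * (k : ℤ) ^ (k - 1) < (p : ℤ))
    (c : Fin k → ℤ)
    (hc : ∀ i : Fin k, c i =
      if (i : ℕ) + 1 < k then (k : ℤ) ^ (i : ℕ)
      else -(∑ j ∈ Finset.range (k - 1), (k : ℤ) ^ j))
    (q : Fin k → ℚ) (hq : ∀ i, q i = ((p : ℚ) + (c i : ℚ)) / ((k : ℚ) * (p : ℚ)))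
    (H : AddSubmonoid ℚ) (hpos : ∀ x ∈ H, 0 ≤ x)
    (hval : ∀ x ∈ H, x ≠ 0 → 0 ≤ padicValRat p x)
    (H' : AddSubmonoid ℚ) (hH' : H' = H ⊔ AddSubmonoid.closure (Set.range q)) :
    ∀ i, IsAtomOf H' (q i) := by
  intro i
  set K : ℤ := (k:ℤ) ^ (k - 1) with hKdef
  have hkZ : (2:ℤ) ≤ (k:ℤ) := by exact_mod_cast hk
  have hK1 : 1 ≤ K := one_le_pow₀ (by omega)
  have h3K : 3 * K < (p:ℤ) := by nlinarith
  have hkp : (k:ℤ) < (p:ℤ) := by nlinarith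
  have hS1 : 1 ≤ ∑ j ∈ Finset.range (k - 1), (k : ℤ) ^ j := by
    calc (1:ℤ) = (k:ℤ)^0 := by simp
    _ ≤ _ := Finset.single_le_sum (fun i _ => pow_nonneg (by omega) i)
        (Finset.mem_range.mpr (by omega))
  have hSK : (∑ j ∈ Finset.range (k - 1), (k : ℤ) ^ j) ≤ K := geom_le_pow _ hkZ _
  have hcb : ∀ j : Fin k, c j ≠ 0 ∧ -K ≤ c j ∧ c j ≤ K := by
    intro j
    rw [hc j]
    split_ifs with hj
    · refine ⟨(pow_pos (by omega : (0:ℤ) < k) _).ne', ?_, ?_⟩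
      · have := pow_nonneg (by omega : (0:ℤ) ≤ k) (j:ℕ); omega
      · exact pow_le_pow_right₀ (by omega) (by omega)
    · refine ⟨by omega, by omega, by omega⟩
  have hcne : ∀ i' j : Fin k, i' ≠ j → c i' ≠ c j := by
    intro i' j hij
    rw [hc i', hc j]
    have hmono : ∀ a b : ℕ, a < b → (k:ℤ)^a < (k:ℤ)^b := fun a b hab =>
      pow_lt_pow_right₀ (by omega) hab
    have hvne : (i':ℕ) ≠ (j:ℕ) := fun h => hij (Fin.ext h)
    split_ifs with h1 h2 h2
    · rcases Nat.lt_or_ge (i':ℕ) (j:ℕ) with h | h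
      · exact (hmono _ _ h).ne
      · exact (hmono _ _ (by omega)).ne'
    · have : (0:ℤ) < (k:ℤ)^(i':ℕ) := pow_pos (by omega) _
      omega
    · have : (0:ℤ) < (k:ℤ)^(j:ℕ) := pow_pos (by omega) _
      omega
    · exact absurd (Fin.ext (show (i':ℕ) = (j:ℕ) by omega)) hij
  have hnd : ∀ M : ℤ, M ≠ 0 → |M| < (p:ℤ) → ¬ (p:ℤ) ∣ M := by
    intro M h0 hlt hd
    have := Int.le_of_dvd (abs_pos.mpr h0) ((dvd_abs _ _).mpr hd)
    omega
  have hpdk : ¬ (p:ℤ) ∣ (k:ℤ) := hnd _ (by omega) (by rw [abs_of_nonneg (by omega)]; omega)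
  have hkQ : (0:ℚ) < (k:ℚ) := by positivity
  have hpQ : (0:ℚ) < (p:ℚ) := by exact_mod_cast (by omega : (0:ℤ) < (p:ℤ))
  have hkpQ : (0:ℚ) < (k:ℚ) * (p:ℚ) := mul_pos hkQ hpQ
  -- membership and nonzeroness
  have hmem : q i ∈ H' := by
    rw [hH']
    exact le_sup_right (α := AddSubmonoid ℚ)
      (AddSubmonoid.subset_closure (Set.mem_range_self i))
  have hqne : q i ≠ 0 := by
    rw [hq i]
    apply div_ne_zero _ hkpQ.ne'
    have : (0:ℤ) < (p:ℤ) + c i := by have := (hcb i).2.1; omega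
    have : (0:ℚ) < (p:ℚ) + (c i : ℚ) := by exact_mod_cast this
    exact this.ne'
  refine ⟨hmem, hqne, ?_⟩
  intro v hv w hw hv0 hw0 heq
  rw [hH', AddSubmonoid.mem_sup] at hv hw
  obtain ⟨y, hy, z, hz, rfl⟩ := hv
  obtain ⟨y', hy', z', hz', rfl⟩ := hw
  obtain ⟨m, rfl⟩ := closure_range_mem k q hz
  obtain ⟨n, rfl⟩ := closure_range_mem k q hz'
  set a : Fin k → ℕ := fun j => m j + n j with ha
  -- combined equation
  have hh : q i = (y + y') + ∑ j, (a j : ℚ) * q j := by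
    rw [heq]
    have : ∑ j, (a j : ℚ) * q j = (∑ j, (m j:ℚ) * q j) + ∑ j, (n j:ℚ) * q j := by
      rw [← Finset.sum_add_distrib]
      exact Finset.sum_congr rfl fun j _ => by rw [ha]; push_cast; ring
    rw [this]; ring
  have hyH : y + y' ∈ H := H.add_mem hy hy'
  have hynn : 0 ≤ y + y' := hpos _ hyH
  set A : ℤ := ∑ j, (a j : ℤ) * ((p:ℤ) + c j) with hA
  have hSA : (∑ j, (a j:ℚ) * q j) = (A:ℚ) / ((k:ℚ) * (p:ℚ)) := by
    rw [hA]
    push_cast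
    rw [Finset.sum_div]
    exact Finset.sum_congr rfl fun j _ => by rw [hq j]; ring
  have hMQ : ((k:ℚ) * (p:ℚ)) * (y + y') = (((p:ℤ) + c i - A : ℤ):ℚ) := by
    have h1 : y + y' = q i - (A:ℚ) / ((k:ℚ) * (p:ℚ)) := by
      rw [hSA] at hh; linarith
    rw [h1, hq i]
    push_cast
    field_simp
  set M : ℤ := (p:ℤ) + c i - A with hM
  have hM0 : (0:ℤ) ≤ M := by
    have : (0:ℚ) ≤ (M:ℚ) := by rw [← hMQ]; positivity
    exact_mod_cast this
  set s : ℕ := ∑ j, a j with hs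
  have hAlb : (s:ℤ) * ((p:ℤ) - K) ≤ A := by
    rw [hA, hs]
    push_cast
    rw [Finset.sum_mul]
    exact Finset.sum_le_sum fun j _ => by
      have h1 := (hcb j).2.1
      have h2 : (0:ℤ) ≤ (a j : ℤ) := by positivity
      nlinarith
  have hci := hcb i
  -- rule out s = 0 and s ≥ 2
  have hy'ne : M ≠ 0 → y + y' ≠ 0 := by
    intro hMne hcon
    rw [hcon, mul_zero] at hMQ
    exact hMne (by exact_mod_cast hMQ.symm)
  rcases Nat.lt_or_ge s 2 with hs2 | hs2
  swap
  · -- s ≥ 2 : size contradiction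
    have : (2:ℤ) * ((p:ℤ) - K) ≤ (s:ℤ) * ((p:ℤ) - K) := by
      have : (2:ℤ) ≤ (s:ℤ) := by exact_mod_cast hs2
      nlinarith
    omega
  rcases Nat.lt_or_ge s 1 with hs0 | hs1
  · -- s = 0
    have hs0' : s = 0 := by omega
    have hall : ∀ j, a j = 0 := by
      intro j
      have := Finset.sum_eq_zero_iff.mp (hs ▸ hs0' : ∑ j, a j = 0) j (Finset.mem_univ j)
      exact this
    have hA0 : A = 0 := by
      rw [hA]
      exact Finset.sum_eq_zero fun j _ => by rw [hall j]; simp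
    have hMval : M = (p:ℤ) + c i := by omega
    have hMne : M ≠ 0 := by omega -- from hci : c i bounds, p > 3K
    refine key_val p k hp hpdk (y + y') (hy'ne hMne) (hval _ hyH (hy'ne hMne)) M hMQ ?_
    rw [hMval]
    intro hd
    have : (p:ℤ) ∣ c i := (dvd_add_right (dvd_refl (p:ℤ))).mp hd
    exact hnd (c i) hci.1 (by rw [abs_lt]; omega) this
  · -- s = 1
    have hs1' : s = 1 := by omega
    obtain ⟨j0, hj0⟩ : ∃ j0, a j0 ≠ 0 := by
      by_contra hcon
      push_neg at hcon
      have : s = 0 := by rw [hs]; exact Finset.sum_eq_zero fun j _ => hcon j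
      omega
    have hj0le : a j0 ≤ s := hs ▸ Finset.single_le_sum (fun _ _ => Nat.zero_le _) (Finset.mem_univ j0)
    have hj01 : a j0 = 1 := by omega
    have hrest : ∀ l, l ≠ j0 → a l = 0 := by
      intro l hl
      by_contra hcon
      have hsub : ∑ t ∈ ({l, j0} : Finset (Fin k)), a t ≤ s :=
        hs ▸ Finset.sum_le_sum_of_subset (Finset.subset_univ _)
      rw [Finset.sum_pair hl] at hsub
      omega
    have hAval : A = (p:ℤ) + c j0 := by
      rw [hA]
      rw [Finset.sum_eq_single j0]
      · rw [hj01]; ring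
      · intro l _ hl; rw [hrest l hl]; simp
      · intro h; exact absurd (Finset.mem_univ j0) h
    by_cases hji : j0 = i
    · -- the good decomposition: both parts must vanish, contradiction
      have hMzero : M = 0 := by rw [hM, hAval, hji]; ring
      have hyy0 : y + y' = 0 := by
        have : ((k:ℚ) * (p:ℚ)) * (y + y') = 0 := by rw [hMQ, hMzero]; simp
        exact (mul_eq_zero.mp this).resolve_left hkpQ.ne'
      have hy0 : y = 0 := le_antisymm (by linarith [hpos y hy, hpos y' hy']) (hpos y hy)
      have hy'0 : y' = 0 := by linarith [hpos y hy]
      have hsum_mn : (∑ j, m j) + (∑ j, n j) = 1 := by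
        rw [← Finset.sum_add_distrib]
        have : ∑ j, (m j + n j) = s := by rw [hs]
        omega
      rcases Nat.eq_zero_or_pos (∑ j, m j) with hm0 | hmpos
      · apply hv0
        have : ∀ j, m j = 0 := fun j => Finset.sum_eq_zero_iff.mp hm0 j (Finset.mem_univ j)
        rw [hy0, Finset.sum_eq_zero fun j _ => by rw [this j]; simp]
        simp
      · apply hw0
        have hn0 : (∑ j, n j) = 0 := by omega
        have : ∀ j, n j = 0 := fun j => Finset.sum_eq_zero_iff.mp hn0 j (Finset.mem_univ j)
        rw [hy'0, Finset.sum_eq_zero fun j _ => by rw [this j]; simp]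
        simp
    · -- j0 ≠ i : valuation contradiction
      have hMval : M = c i - c j0 := by rw [hM, hAval]; ring
      have hMne : M ≠ 0 := by
        rw [hMval]
        have := hcne i j0 (fun h => hji h.symm)
        omega
      refine key_val p k hp hpdk (y + y') (hy'ne hMne) (hval _ hyH (hy'ne hMne)) M hMQ ?_
      apply hnd M hMne
      have h1 := (hcb i).2.1
      have h2 := (hcb i).2.2
      have h3 := (hcb j0).2.1
      have h4 := (hcb j0).2.2
      rw [abs_lt, hMval]
      omega
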